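/- Let $(\Omega,\Sigma,\lambda)$ be a probability space and let $v_1, v_2$ be real-valued integrable functions on $\Omega$ satisfying $1-\delta < \int_\Omega |v_1|\,d\lambda \le \int_\Omega (v_1^2+v_2^2)^{1/2}\,d\lambda \le 1$ for some $\delta > 0$. Then $\int_\Omega |v_2|\,d\lambda \le \sqrt{2\delta}$. -/

import Mathlib

open MeasureTheory

theorem stmt0 {Ω : Type*} [MeasurableSpace Ω] (μ : Measure Ω) [IsProbabilityMeasure μ]
    (v1 v2 : Ω → ℝ) (hv1 : Integrable v1 μ) (hv2 : Integrable v2 μ)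
    (δ : ℝ) (hδ : 0 < δ)
    (h1 : 1 - δ < ∫ t, |v1 t| ∂μ)
    (h2 : ∫ t, |v1 t| ∂μ ≤ ∫ t, Real.sqrt ((v1 t) ^ 2 + (v2 t) ^ 2) ∂μ)
    (h3 : ∫ t, Real.sqrt ((v1 t) ^ 2 + (v2 t) ^ 2) ∂μ ≤ 1) :
    ∫ t, |v2 t| ∂μ ≤ Real.sqrt (2 * δ) := by
  set a := Real.sqrt (2 / δ) with ha
  have ha0 : 0 < a := Real.sqrt_pos.2 (by positivity)
  have haa : a * a = 2 / δ := Real.mul_self_sqrt (by positivity)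
  have haa' : a * a * δ = 2 := by rw [haa]; field_simp
  set r : Ω → ℝ := fun t => Real.sqrt ((v1 t) ^ 2 + (v2 t) ^ 2) with hrdef
  -- basic pointwise facts
  have hr_nonneg : ∀ t, 0 ≤ r t := fun t => Real.sqrt_nonneg _
  have hr_sq : ∀ t, r t ^ 2 = (v1 t) ^ 2 + (v2 t) ^ 2 := by
    intro t
    rw [hrdef]
    exact Real.sq_sqrt (by positivity)
  have hr_ge : ∀ t, |v1 t| ≤ r t := by
    intro t
    have := Real.sqrt_le_sqrt (show (v1 t) ^ 2 ≤ (v1 t) ^ 2 + (v2 t) ^ 2 from le_add_of_nonneg_right (sq_nonneg (v2 t)))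
    simpa [Real.sqrt_sq_eq_abs] using this
  have hr_le : ∀ t, r t ≤ |v1 t| + |v2 t| := by
    intro t
    have h : (v1 t) ^ 2 + (v2 t) ^ 2 ≤ (|v1 t| + |v2 t|) ^ 2 := by
      nlinarith [sq_abs (v1 t), sq_abs (v2 t), abs_nonneg (v1 t), abs_nonneg (v2 t)]
    calc r t ≤ Real.sqrt ((|v1 t| + |v2 t|) ^ 2) := Real.sqrt_le_sqrt h
      _ = |v1 t| + |v2 t| := Real.sqrt_sq (by positivity)
  -- integrability of r
  have hr_int : Integrable r μ := by
    refine (hv1.abs.add hv2.abs).mono ?_ ?_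
    · exact (Real.continuous_sqrt.comp_aestronglyMeasurable
        (((hv1.aestronglyMeasurable.mul hv1.aestronglyMeasurable).add
          (hv2.aestronglyMeasurable.mul hv2.aestronglyMeasurable)).congr
          (Filter.Eventually.of_forall fun t => by simp [hrdef]; ring)))
    · filter_upwards with t
      have h1' := hr_nonneg t
      have h2' := hr_le t
      have hpos : (0:ℝ) ≤ |v1 t| + |v2 t| := by positivity
      simp only [Real.norm_eq_abs, Pi.add_apply, abs_of_nonneg h1', abs_of_nonneg hpos]
      exact h2'
  -- pointwise key inequality
  have key : ∀ t, |v2 t| ≤ (2 * r t + a * a * (r t - |v1 t|)) / (2 * a) := by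
    intro t
    have h1' := hr_sq t
    have h2' := hr_ge t
    have h3' := hr_nonneg t
    have hv2sq : |v2 t| ^ 2 ≤ 2 * r t * (r t - |v1 t|) := by
      nlinarith [sq_abs (v1 t), sq_abs (v2 t), abs_nonneg (v1 t)]
    rw [le_div_iff₀ (by positivity)]
    have hY : 0 ≤ 2 * r t + a * a * (r t - |v1 t|) := by
      have h4 : 0 ≤ r t - |v1 t| := by linarith
      positivity
    have hsq : (|v2 t| * (2 * a)) ^ 2 ≤ (2 * r t + a * a * (r t - |v1 t|)) ^ 2 := by
      nlinarith [sq_nonneg (2 * r t - a * a * (r t - |v1 t|)),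
        mul_le_mul_of_nonneg_left hv2sq (by positivity : (0:ℝ) ≤ 4 * (a * a)),
        sq_abs (v2 t)]
    calc |v2 t| * (2 * a) = Real.sqrt ((|v2 t| * (2 * a)) ^ 2) :=
          (Real.sqrt_sq (by positivity)).symm
      _ ≤ Real.sqrt ((2 * r t + a * a * (r t - |v1 t|)) ^ 2) := Real.sqrt_le_sqrt hsq
      _ = 2 * r t + a * a * (r t - |v1 t|) := Real.sqrt_sq hY
  -- integrate
  have hint1 : Integrable (fun t => 2 * r t) μ := hr_int.const_mul 2
  have hint2 : Integrable (fun t => a * a * (r t - |v1 t|)) μ :=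
    (hr_int.sub hv1.abs).const_mul (a * a)
  have hRHS_int : Integrable (fun t => (2 * r t + a * a * (r t - |v1 t|)) / (2 * a)) μ :=
    (hint1.add hint2).div_const (2 * a)
  have hmono : ∫ t, |v2 t| ∂μ ≤ ∫ t, (2 * r t + a * a * (r t - |v1 t|)) / (2 * a) ∂μ :=
    integral_mono hv2.abs hRHS_int key
  have hint : ∫ t, (2 * r t + a * a * (r t - |v1 t|)) / (2 * a) ∂μ
      = (2 * (∫ t, r t ∂μ) + a * a * ((∫ t, r t ∂μ) - ∫ t, |v1 t| ∂μ)) / (2 * a) := by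
    rw [integral_div]
    congr 1
    rw [integral_add hint1 hint2, integral_const_mul, integral_const_mul,
      integral_sub hr_int hv1.abs]
  rw [hint] at hmono
  -- identify sqrt (2δ) = a * δ
  have hsqrt : Real.sqrt (2 * δ) = a * δ := by
    rw [ha, show (2:ℝ) * δ = 2 / δ * δ ^ 2 by field_simp,
      Real.sqrt_mul (by positivity), Real.sqrt_sq hδ.le]
  rw [hsqrt]
  set I := ∫ t, r t ∂μ with hI
  set J := ∫ t, |v1 t| ∂μ with hJ
  have hIJ : I - J ≤ δ := by linarith
  have hfin : (2 * I + a * a * (I - J)) / (2 * a) ≤ a * δ := by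
    rw [div_le_iff₀ (by positivity)]
    have hf1 : a * a * (I - J) ≤ a * a * δ :=
      mul_le_mul_of_nonneg_left hIJ (by positivity)
    nlinarith [hf1, h3, haa']
  linarith
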